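/- For every ε > 0 there exists R > 0 such that: for all s ∈ [0,1], μ ∈ ℂ with |μ| ≤ 1, and z ∈ ℂ with |z| ≥ R satisfying (z − sμ)e^{2izℓ} = z + sμ, the distance from z to the lattice (π/ℓ)ℤ is less than ε. -/

import Mathlib

open Complex

/-- Quantitative smallness of `log` near `1`. -/
lemma log_small (ε' : ℝ) (hε' : 0 < ε') :
    ∃ δ > 0, ∀ u : ℂ, ‖u - 1‖ < δ → ‖Complex.log u‖ < ε' := by
  have hc : ContinuousAt Complex.log 1 := by
    exact continuousAt_clog (Or.inl one_pos)
  rw [Metric.continuousAt_iff] at hc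
  obtain ⟨δ, hδ, h⟩ := hc ε' hε'
  refine ⟨δ, hδ, fun u hu => ?_⟩
  have := h (show dist u 1 < δ by rwa [Complex.dist_eq])
  simpa [Complex.dist_eq, Complex.log_one] using this

/-- Large zeros of `φ_{sμ}(z) = (z - sμ)e^{2izℓ} - (z + sμ)` are uniformly close
to the lattice `(π/ℓ)ℤ`, uniformly in `s ∈ [0,1]` and `|μ| ≤ 1`. -/
theorem zeros_near_lattice (ℓ : ℝ) (hℓ : 0 < ℓ) (ε : ℝ) (hε : 0 < ε) :
    ∃ R > 0, ∀ s : ℝ, s ∈ Set.Icc (0:ℝ) 1 → ∀ μ : ℂ, ‖μ‖ ≤ 1 →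
      ∀ z : ℂ, R ≤ ‖z‖ →
        (z - s * μ) * exp (2 * I * z * ℓ) = z + s * μ →
        ∃ n : ℤ, ‖z - n * (Real.pi / ℓ)‖ < ε := by
  obtain ⟨δ, hδ, hlog⟩ := log_small (2 * ℓ * ε) (by positivity)
  refine ⟨max 2 (1 + 4 / δ), lt_of_lt_of_le two_pos (le_max_left _ _),
    fun s hs μ hμ z hz heq => ?_⟩
  have hsμ : ‖(s : ℂ) * μ‖ ≤ 1 := by
    rw [norm_mul, Complex.norm_of_nonneg hs.1]
    exact mul_le_one₀ hs.2 (norm_nonneg _) hμ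
  have hz2 : (2 : ℝ) ≤ ‖z‖ := le_trans (le_max_left _ _) hz
  have hzR : 1 + 4 / δ ≤ ‖z‖ := le_trans (le_max_right _ _) hz
  have hden : 1 ≤ ‖z - s * μ‖ := by
    have := norm_sub_norm_le z ((s : ℂ) * μ)
    linarith
  have hne : z - (s : ℂ) * μ ≠ 0 := by
    intro h
    rw [h, norm_zero] at hden; linarith
  -- u = exp(2izℓ) = (z+sμ)/(z-sμ)
  set u := Complex.exp (2 * I * z * ℓ) with hu
  have hueq : u = (z + s * μ) / (z - s * μ) := by
    rw [eq_div_iff hne, mul_comm]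
    exact heq
  have hu1 : ‖u - 1‖ < δ := by
    have h1 : u - 1 = 2 * (s * μ) / (z - s * μ) := by
      rw [hueq]; field_simp; ring
    rw [h1, norm_div, norm_mul]
    have hnum : ‖(2:ℂ)‖ * ‖(s:ℂ) * μ‖ ≤ 2 := by
      have : ‖(2:ℂ)‖ = 2 := by norm_num
      rw [this]
      nlinarith [norm_nonneg ((s:ℂ)*μ)]
    have hdd : δ / 2 * 4 / δ = 2 := by field_simp; ring
    have hden2 : 4 / δ ≤ ‖z - s * μ‖ := by
      have := norm_sub_norm_le z ((s : ℂ) * μ)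
      linarith
    have h4 : (0:ℝ) < 4 / δ := by positivity
    calc ‖(2:ℂ)‖ * ‖(s:ℂ)*μ‖ / ‖z - s*μ‖
        ≤ 2 / (4/δ) := div_le_div₀ (by norm_num) hnum h4 hden2
      _ = δ / 2 := by field_simp; ring
      _ < δ := by linarith
  have hlu := hlog u hu1
  have hune : u ≠ 0 := by rw [hu]; exact Complex.exp_ne_zero _
  have hℓc : (ℓ:ℂ) ≠ 0 := by exact_mod_cast hℓ.ne'
  have h2Iℓ : (2 * I * (ℓ:ℂ)) ≠ 0 := by simp [I_ne_zero, hℓc]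
  have hexp : Complex.exp (Complex.log u) = Complex.exp (2 * I * z * ℓ) := by
    rw [Complex.exp_log hune, hu]
  obtain ⟨n, hn⟩ := Complex.exp_eq_exp_iff_exists_int.mp hexp
  refine ⟨-n, ?_⟩
  have hzeq : z - ((-n : ℤ):ℂ) * ((Real.pi:ℂ) / (ℓ:ℂ)) = Complex.log u / (2 * I * ℓ) := by
    rw [eq_div_iff h2Iℓ]
    push_cast
    field_simp
    linear_combination (-1 : ℂ) * hn
  rw [hzeq, norm_div]
  have habs : ‖2 * I * (ℓ:ℂ)‖ = 2 * ℓ := by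
    simp [_root_.abs_of_nonneg hℓ.le]
  rw [habs, div_lt_iff₀ (by positivity : (0:ℝ) < 2 * ℓ)]
  calc ‖Complex.log u‖ < 2 * ℓ * ε := hlu
    _ = ε * (2 * ℓ) := by ring
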